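/- Let a > b > 0. For any triangle P₁P₂P₃ inscribed in the circle of radius a + b centered at the origin whose three side lines are each tangent to the concentric ellipse x²/a² + y²/b² = 1 (i.e., each side lies on a line {(x,y) : p·x + q·y = 1} with a²p² + b²q² = 1), the sum of the squares of the cosines of its three interior angles equals (a² + a*b + b²)/(a+b)², i.e. equals 1 − 2·k' where k' = a*b/(2*(a+b)²). -/

import Mathlib

lemma aux_W (a b x1 y1 x2 y2 p q : ℝ)
    (hC1 : x1^2 + y1^2 = (a+b)^2) (hC2 : x2^2 + y2^2 = (a+b)^2)
    (hne : (x1-x2)^2 + (y1-y2)^2 ≠ 0)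
    (htan : a^2*p^2 + b^2*q^2 = 1) (hL1 : p*x1 + q*y1 = 1) (hL2 : p*x2 + q*y2 = 1) :
    b*(x1*x2) + a*(y1*y2) = -(a*b*(a+b)) := by
  have e1 : y1 - y2 = -(p*(x1*y2 - x2*y1)) := by linear_combination y2*hL1 - y1*hL2
  have e2 : x1 - x2 = q*(x1*y2 - x2*y1) := by linear_combination x2*hL1 - x1*hL2
  have hT : a^2*(y1-y2)^2 + b^2*(x1-x2)^2 = (x1*y2-x2*y1)^2 := by
    rw [e1, e2]; linear_combination (x1*y2-x2*y1)^2 * htan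
  have key : ((x1-x2)^2 + (y1-y2)^2) * (b*(x1*x2) + a*(y1*y2) + a*b*(a+b)) = 0 := by
    linear_combination (-(a+b))*hT +
      ((-1:ℝ)*b*y2^2 + (-2:ℝ)*b*x2^2 + b*x1*x2 + b^3 + (-1:ℝ)*a*y2^2 + a*y1*y2 + (2:ℝ)*a*b^2 + a^2*b)*hC1 +
      (b*y1^2 + b*x1*x2 + (-1:ℝ)*b^3 + a*y1*y2 + (-1:ℝ)*a*y1^2 + (-2:ℝ)*a*b^2 + (-1:ℝ)*a^2*b)*hC2
  have := (mul_eq_zero.mp key).resolve_left hne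
  linarith


lemma aux_sum (a b x1 y1 x2 y2 x3 y3 : ℝ) (hb : 0 < b) (hab : b < a)
    (hC1 : x1^2 + y1^2 = (a+b)^2) (hC2 : x2^2 + y2^2 = (a+b)^2) (hC3 : x3^2 + y3^2 = (a+b)^2)
    (h23 : ¬(x2 = x3 ∧ y2 = y3))
    (hW12 : b*(x1*x2) + a*(y1*y2) = -(a*b*(a+b)))
    (hW13 : b*(x1*x3) + a*(y1*y3) = -(a*b*(a+b)))
    (hW23 : b*(x2*x3) + a*(y2*y3) = -(a*b*(a+b))) :
    (x1*x2 + y1*y2) + (x1*x3 + y1*y3) + (x2*x3 + y2*y3) = -(a^2 + 4*a*b + b^2) := by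
  have ha : 0 < a := hb.trans hab
  set z1 : ℂ := x1 + y1*Complex.I with hz1
  set w1 : ℂ := x1 - y1*Complex.I with hw1
  set z2 : ℂ := x2 + y2*Complex.I with hz2
  set w2 : ℂ := x2 - y2*Complex.I with hw2
  set z3 : ℂ := x3 + y3*Complex.I with hz3
  set w3 : ℂ := x3 - y3*Complex.I with hw3
  have hC1' : ((x1:ℂ))^2 + (y1:ℂ)^2 = ((a:ℂ)+b)^2 := by exact_mod_cast congrArg Complex.ofReal hC1
  have hC2' : ((x2:ℂ))^2 + (y2:ℂ)^2 = ((a:ℂ)+b)^2 := by exact_mod_cast congrArg Complex.ofReal hC2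
  have hC3' : ((x3:ℂ))^2 + (y3:ℂ)^2 = ((a:ℂ)+b)^2 := by exact_mod_cast congrArg Complex.ofReal hC3
  have hzw1 : z1*w1 = ((a:ℂ)+b)^2 := by
    rw [hz1, hw1]; linear_combination hC1' - (y1:ℂ)^2*Complex.I_sq
  have hzw2 : z2*w2 = ((a:ℂ)+b)^2 := by
    rw [hz2, hw2]; linear_combination hC2' - (y2:ℂ)^2*Complex.I_sq
  have hzw3 : z3*w3 = ((a:ℂ)+b)^2 := by
    rw [hz3, hw3]; linear_combination hC3' - (y3:ℂ)^2*Complex.I_sq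
  have hW12' : ((b:ℂ))*(x1*x2) + (a:ℂ)*(y1*y2) = -((a:ℂ)*b*(a+b)) := by exact_mod_cast congrArg Complex.ofReal hW12
  have hW13' : ((b:ℂ))*(x1*x3) + (a:ℂ)*(y1*y3) = -((a:ℂ)*b*(a+b)) := by exact_mod_cast congrArg Complex.ofReal hW13
  have hW23' : ((b:ℂ))*(x2*x3) + (a:ℂ)*(y2*y3) = -((a:ℂ)*b*(a+b)) := by exact_mod_cast congrArg Complex.ofReal hW23
  -- the quadratic coefficients
  set A : ℂ := ((b:ℂ)-a)*z1 + ((a:ℂ)+b)*w1 with hA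
  set A' : ℂ := ((a:ℂ)+b)*z1 + ((b:ℂ)-a)*w1 with hA'
  set B : ℂ := 4*(a:ℂ)*b*((a:ℂ)+b) with hB
  -- complexified tangency relations for sides 12 and 13
  have hF12 : ((b:ℂ)-a)*(z1*z2 + w1*w2) + ((a:ℂ)+b)*(z1*w2 + w1*z2) = -4*(a:ℂ)*b*((a:ℂ)+b) := by
    rw [hz1, hw1, hz2, hw2]
    linear_combination 4*hW12' + (-4*(a:ℂ)*(y1:ℂ)*(y2:ℂ))*Complex.I_sq
  have hF13 : ((b:ℂ)-a)*(z1*z3 + w1*w3) + ((a:ℂ)+b)*(z1*w3 + w1*z3) = -4*(a:ℂ)*b*((a:ℂ)+b) := by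
    rw [hz1, hw1, hz3, hw3]
    linear_combination 4*hW13' + (-4*(a:ℂ)*(y1:ℂ)*(y3:ℂ))*Complex.I_sq
  -- z2, z3 are roots of the quadratic A X² + B X + (a+b)²*A'
  have hroot2 : A*z2^2 + B*z2 + ((a:ℂ)+b)^2*A' = 0 := by
    rw [hA, hA', hB]; linear_combination z2*hF12 - (((a:ℂ)+b)*z1 + ((b:ℂ)-a)*w1)*hzw2
  have hroot3 : A*z3^2 + B*z3 + ((a:ℂ)+b)^2*A' = 0 := by
    rw [hA, hA', hB]; linear_combination z3*hF13 - (((a:ℂ)+b)*z1 + ((b:ℂ)-a)*w1)*hzw3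
  have hroot2' : A'*w2^2 + B*w2 + ((a:ℂ)+b)^2*A = 0 := by
    rw [hA, hA', hB]; linear_combination w2*hF12 - (((b:ℂ)-a)*z1 + ((a:ℂ)+b)*w1)*hzw2
  have hroot3' : A'*w3^2 + B*w3 + ((a:ℂ)+b)^2*A = 0 := by
    rw [hA, hA', hB]; linear_combination w3*hF13 - (((b:ℂ)-a)*z1 + ((a:ℂ)+b)*w1)*hzw3
  have hzne : z2 ≠ z3 := by
    intro h
    rw [hz2, hz3] at h
    have hre := congrArg Complex.re h
    have him := congrArg Complex.im h
    simp at hre him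
    exact h23 ⟨hre, him⟩
  have hwne : w2 ≠ w3 := by
    intro h
    rw [hw2, hw3] at h
    have hre := congrArg Complex.re h
    have him := congrArg Complex.im h
    simp at hre him
    exact h23 ⟨hre, him⟩
  -- Vieta
  have hsum : A*(z2+z3) = -B := by
    have h := sub_eq_zero.mpr (hroot2.trans hroot3.symm)
    have h2 : (z2 - z3)*(A*(z2+z3) + B) = 0 := by linear_combination h
    have := (mul_eq_zero.mp h2).resolve_left (sub_ne_zero.mpr hzne)
    linear_combination this
  have hprod : A*(z2*z3) = ((a:ℂ)+b)^2*A' := by linear_combination z2*hsum - hroot2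
  have hsum' : A'*(w2+w3) = -B := by
    have h := sub_eq_zero.mpr (hroot2'.trans hroot3'.symm)
    have h2 : (w2 - w3)*(A'*(w2+w3) + B) = 0 := by linear_combination h
    have := (mul_eq_zero.mp h2).resolve_left (sub_ne_zero.mpr hwne)
    linear_combination this
  -- nondegeneracy: A, A' ≠ 0
  have hx1y1 : ¬(x1 = 0 ∧ y1 = 0) := by
    rintro ⟨hx, hy⟩
    rw [hx, hy] at hC1
    nlinarith
  have hAne : A ≠ 0 := by
    intro h
    rw [hA, hz1, hw1] at h
    have hre := congrArg Complex.re h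
    have him := congrArg Complex.im h
    simp [Complex.add_re, Complex.add_im] at hre him
    apply hx1y1
    constructor
    · have : (2*b)*x1 = 0 := by linear_combination hre
      exact (mul_eq_zero.mp this).resolve_left (by positivity)
    · have : (2*a)*y1 = 0 := by linear_combination -him
      exact (mul_eq_zero.mp this).resolve_left (by positivity)
  have hA'ne : A' ≠ 0 := by
    intro h
    rw [hA', hz1, hw1] at h
    have hre := congrArg Complex.re h
    have him := congrArg Complex.im h
    simp [Complex.add_re, Complex.add_im] at hre him
    apply hx1y1
    constructor
    · have : (2*b)*x1 = 0 := by linear_combination hre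
      exact (mul_eq_zero.mp this).resolve_left (by positivity)
    · have : (2*a)*y1 = 0 := by linear_combination him
      exact (mul_eq_zero.mp this).resolve_left (by positivity)
  -- the key identity
  have hkey : (A*z1 - B)*(A'*w1 - B) = ((a:ℂ)-b)^2*(A*A') := by
    rw [hA, hA', hB]
    linear_combination ((b:ℂ)^2*w1^2 + (2:ℂ)*(b:ℂ)^2*z1*w1 + (b:ℂ)^2*z1^2 + (-1:ℂ)*(a:ℂ)^2*w1^2 + (2:ℂ)*(a:ℂ)^2*z1*w1 + (-1:ℂ)*(a:ℂ)^2*z1^2 + (-16:ℂ)*(a:ℂ)^2*(b:ℂ)^2)*hzw1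
  -- conclude (Σz)(Σw) = (a-b)²
  have hmain : (A*A') * ((z1+z2+z3)*(w1+w2+w3)) = (A*A') * ((a:ℂ)-b)^2 := by
    calc (A*A') * ((z1+z2+z3)*(w1+w2+w3))
        = (A*z1 + A*(z2+z3)) * (A'*w1 + A'*(w2+w3)) := by ring
      _ = (A*z1 - B)*(A'*w1 - B) := by rw [hsum, hsum']; ring
      _ = (A*A') * ((a:ℂ)-b)^2 := by rw [hkey]; ring
  have hSS : (z1+z2+z3)*(w1+w2+w3) = ((a:ℂ)-b)^2 :=
    mul_left_cancel₀ (mul_ne_zero hAne hA'ne) hmain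
  -- extract the real statement
  have hfin : (((x1*x2 + y1*y2) + (x1*x3 + y1*y3) + (x2*x3 + y2*y3) : ℝ) : ℂ)
      = ((-(a^2 + 4*a*b + b^2) : ℝ) : ℂ) := by
    push_cast
    rw [hz1, hw1, hz2, hw2, hz3, hw3] at hSS
    linear_combination (1/2 : ℂ)*hSS - (1/2:ℂ)*hzw1 - (1/2:ℂ)*hzw2 - (1/2:ℂ)*hzw3 +
      ((y1:ℂ)*y2 + (y1:ℂ)*y3 + (y2:ℂ)*y3)*Complex.I_sq
  exact_mod_cast hfin

/-- Inscribed-chord identity for three points on the circle of radius `a+b`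
centered at the origin. -/
lemma aux_chord (a b x1 y1 x2 y2 x3 y3 : ℝ)
    (hC1 : x1^2 + y1^2 = (a+b)^2) (hC2 : x2^2 + y2^2 = (a+b)^2) (hC3 : x3^2 + y3^2 = (a+b)^2) :
    ((x2-x1)*(x3-x1) + (y2-y1)*(y3-y1))^2 * (4*(a+b)^2) =
      (4*(a+b)^2 - ((x2-x3)^2 + (y2-y3)^2)) *
        (((x2-x1)^2 + (y2-y1)^2) * ((x3-x1)^2 + (y3-y1)^2)) := by
  linear_combination (y3^4 + (2:ℝ)*x3^2*y3^2 + x3^4 + (-2:ℝ)*y2*y3^3 + (-2:ℝ)*y2*x3^2*y3 + (2:ℝ)*y2^2*y3^2 + (2:ℝ)*y2^2*x3^2 + (-2:ℝ)*y2^3*y3 + y2^4 + (2:ℝ)*x2*x3*y3^2 + (2:ℝ)*x2*x3^3 + (-8:ℝ)*x2*y2*x3*y3 + (2:ℝ)*x2*y2^2*x3 + (2:ℝ)*x2^2*y3^2 + (-6:ℝ)*x2^2*x3^2 + (-2:ℝ)*x2^2*y2*y3 + (2:ℝ)*x2^2*y2^2 + (2:ℝ)*x2^3*x3 + x2^4 +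 (-2:ℝ)*y1*y3^3 + (-2:ℝ)*y1*x3^2*y3 + (2:ℝ)*y1*y2*y3^2 + (-2:ℝ)*y1*y2*x3^2 + (2:ℝ)*y1*y2^2*y3 + (-2:ℝ)*y1*y2^3 + (4:ℝ)*y1*x2*x3*y3 + (4:ℝ)*y1*x2*y2*x3 + (-2:ℝ)*y1*x2^2*y3 + (-2:ℝ)*y1*x2^2*y2 + y1^2*y3^2 + y1^2*x3^2 + (-2:ℝ)*y1^2*y2*y3 + y1^2*y2^2 + (-2:ℝ)*y1^2*x2*x3 + y1^2*x2^2 + (-2:ℝ)*x1*x3*y3^2 + (-2:ℝ)*x1*x3^3 + (4:ℝ)*x1*y2*x3*y3 + (-2:ℝ)*x1*y2^2*x3 + (-2:ℝ)*x1*x2*y3^2 + (2:ℝ)*x1*x2*x3^2 + (4:ℝ)*x1*x2*y2*y3 + (-2:ℝ)*x1*x2*y2^2 + (2:ℝ)*x1*x2^2*x3 + (-2:ℝ)*x1*x2^3 + x1^2*y3^2 + x1^2*x3^2 + (-2:ℝ)*x1^2*y2*y3 + x1^2*y2^2 + (-2:ℝ)*x1^2*x2*x3 + x1^2*x2^2 +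 (-3:ℝ)*b^2*y3^2 + b^2*x3^2 + (6:ℝ)*b^2*y2*y3 + (-3:ℝ)*b^2*y2^2 + (-2:ℝ)*b^2*x2*x3 + b^2*x2^2 + (-6:ℝ)*a*b*y3^2 + (2:ℝ)*a*b*x3^2 + (12:ℝ)*a*b*y2*y3 + (-6:ℝ)*a*b*y2^2 + (-4:ℝ)*a*b*x2*x3 + (2:ℝ)*a*b*x2^2 + (-3:ℝ)*a^2*y3^2 + a^2*x3^2 + (6:ℝ)*a^2*y2*y3 + (-3:ℝ)*a^2*y2^2 + (-2:ℝ)*a^2*x2*x3 + a^2*x2^2)*hC1 + (y3^4 + (2:ℝ)*x3^2*y3^2 + x3^4 + (-2:ℝ)*y2*y3^3 + (-2:ℝ)*y2*x3^2*y3 + y2^2*y3^2 + y2^2*x3^2 + (-2:ℝ)*x2*x3*y3^2 + (-2:ℝ)*x2*x3^3 + x2^2*y3^2 + x2^2*x3^2 + (-2:ℝ)*y1*y3^3 + (-2:ℝ)*y1*x3^2*y3 + (2:ℝ)*y1*y2*y3^2 + (-2:ℝ)*y1*y2*x3^2 + (-2:ℝ)*y1*y2^2*y3 + (4:ℝ)*y1*x2*x3*y3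 + (-2:ℝ)*y1*x2^2*y3 + (8:ℝ)*y1^2*x3^2 + (4:ℝ)*y1^2*y2*y3 + (-4:ℝ)*y1^2*x2*x3 + (2:ℝ)*x1*x3*y3^2 + (2:ℝ)*x1*x3^3 + (4:ℝ)*x1*y2*x3*y3 + (-2:ℝ)*x1*y2^2*x3 + (-2:ℝ)*x1*x2*y3^2 + (2:ℝ)*x1*x2*x3^2 + (-2:ℝ)*x1*x2^2*x3 + (-8:ℝ)*x1*y1*x3*y3 + (4:ℝ)*x1*y1*y2*x3 + (4:ℝ)*x1*y1*x2*y3 + (-1:ℝ)*b^2*y3^2 + (-5:ℝ)*b^2*x3^2 + (-2:ℝ)*b^2*y2*y3 + b^2*y2^2 + (2:ℝ)*b^2*x2*x3 + b^2*x2^2 + (4:ℝ)*b^2*y1*y3 + (-2:ℝ)*b^2*y1*y2 + (-4:ℝ)*b^2*y1^2 + (-2:ℝ)*b^2*x1*x2 + (2:ℝ)*b^4 + (-2:ℝ)*a*b*y3^2 + (-10:ℝ)*a*b*x3^2 + (-4:ℝ)*a*b*y2*y3 + (2:ℝ)*a*b*y2^2 + (4:ℝ)*a*b*x2*x3 + (2:ℝ)*a*b*x2^2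 + (8:ℝ)*a*b*y1*y3 + (-4:ℝ)*a*b*y1*y2 + (-8:ℝ)*a*b*y1^2 + (-4:ℝ)*a*b*x1*x2 + (8:ℝ)*a*b^3 + (-1:ℝ)*a^2*y3^2 + (-5:ℝ)*a^2*x3^2 + (-2:ℝ)*a^2*y2*y3 + a^2*y2^2 + (2:ℝ)*a^2*x2*x3 + a^2*x2^2 + (4:ℝ)*a^2*y1*y3 + (-2:ℝ)*a^2*y1*y2 + (-4:ℝ)*a^2*y1^2 + (-2:ℝ)*a^2*x1*x2 + (12:ℝ)*a^2*b^2 + (8:ℝ)*a^3*b + (2:ℝ)*a^4)*hC2 + ((-2:ℝ)*y1*y2*y3^2 + (-2:ℝ)*y1*y2*x3^2 + (4:ℝ)*y1*y2^2*y3 + (4:ℝ)*y1*x2*y2*x3 + (4:ℝ)*y1^2*y2*y3 + (-8:ℝ)*y1^2*y2^2 + (-4:ℝ)*y1^2*x2*x3 + (-4:ℝ)*x1*y2^2*x3 + (-2:ℝ)*x1*x2*y3^2 + (-2:ℝ)*x1*x2*x3^2 + (4:ℝ)*x1*x2*y2*y3 + (4:ℝ)*x1*y1*y2*x3 + (4:ℝ)*x1*y1*x2*y3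 + (-8:ℝ)*x1*y1*x2*y2 + (2:ℝ)*b^2*y3^2 + (2:ℝ)*b^2*x3^2 + (-4:ℝ)*b^2*y2*y3 + (4:ℝ)*b^2*y2^2 + (-4:ℝ)*b^2*y1*y3 + (2:ℝ)*b^2*y1*y2 + (4:ℝ)*b^2*y1^2 + (2:ℝ)*b^2*x1*x2 + (-2:ℝ)*b^4 + (4:ℝ)*a*b*y3^2 + (4:ℝ)*a*b*x3^2 + (-8:ℝ)*a*b*y2*y3 + (8:ℝ)*a*b*y2^2 + (-8:ℝ)*a*b*y1*y3 + (4:ℝ)*a*b*y1*y2 + (8:ℝ)*a*b*y1^2 + (4:ℝ)*a*b*x1*x2 + (-8:ℝ)*a*b^3 + (2:ℝ)*a^2*y3^2 + (2:ℝ)*a^2*x3^2 + (-4:ℝ)*a^2*y2*y3 + (4:ℝ)*a^2*y2^2 + (-4:ℝ)*a^2*y1*y3 + (2:ℝ)*a^2*y1*y2 + (4:ℝ)*a^2*y1^2 + (2:ℝ)*a^2*x1*x2 + (-12:ℝ)*a^2*b^2 + (-8:ℝ)*a^3*b + (-2:ℝ)*a^4)*hC3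

lemma div_step (ip n2 n3 c R2 : ℝ) (hn2 : n2 ≠ 0) (hn3 : n3 ≠ 0) (hR : (0:ℝ) < R2)
    (h : ip^2 * (4*R2) = (4*R2 - c) * (n2*n3)) : ip^2/(n2*n3) = 1 - c/(4*R2) := by
  have hR' : (4*R2) ≠ 0 := by positivity
  field_simp
  linear_combination h

lemma coord_cos_sq (P Q R : EuclideanSpace ℝ (Fin 2)) :
    Real.cos (EuclideanGeometry.angle Q P R) ^ 2 =
      ((Q 0 - P 0)*(R 0 - P 0) + (Q 1 - P 1)*(R 1 - P 1))^2 /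
        (((Q 0 - P 0)^2 + (Q 1 - P 1)^2) * ((R 0 - P 0)^2 + (R 1 - P 1)^2)) := by
  have hinner : (inner ℝ (Q -ᵥ P) (R -ᵥ P) : ℝ)
      = (Q 0 - P 0)*(R 0 - P 0) + (Q 1 - P 1)*(R 1 - P 1) := by
    simp [vsub_eq_sub, PiLp.inner_apply, Fin.sum_univ_two]; ring
  have hn2 : ‖Q -ᵥ P‖^2 = (Q 0 - P 0)^2 + (Q 1 - P 1)^2 := by
    rw [vsub_eq_sub, EuclideanSpace.norm_eq, Real.sq_sqrt (by positivity)]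
    simp [Fin.sum_univ_two, sq_abs]
  have hn3 : ‖R -ᵥ P‖^2 = (R 0 - P 0)^2 + (R 1 - P 1)^2 := by
    rw [vsub_eq_sub, EuclideanSpace.norm_eq, Real.sq_sqrt (by positivity)]
    simp [Fin.sum_univ_two, sq_abs]
  rw [EuclideanGeometry.angle, InnerProductGeometry.cos_angle, div_pow, mul_pow, hinner, hn2, hn3]

lemma coord_ne (P Q : EuclideanSpace ℝ (Fin 2)) (h : P ≠ Q) :
    (Q 0 - P 0)^2 + (Q 1 - P 1)^2 ≠ 0 := by
  intro h0
  apply h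
  have h1 : P 0 = Q 0 := by nlinarith [sq_nonneg (Q 0 - P 0), sq_nonneg (Q 1 - P 1)]
  have h2 : P 1 = Q 1 := by nlinarith [sq_nonneg (Q 0 - P 0), sq_nonneg (Q 1 - P 1)]
  ext i
  fin_cases i
  · exact h1
  · exact h2

lemma coord_circle (P : EuclideanSpace ℝ (Fin 2)) (r : ℝ) (h : dist P 0 = r) :
    P 0 ^ 2 + P 1 ^ 2 = r ^ 2 := by
  rw [EuclideanSpace.dist_eq] at h
  have := congrArg (·^2) h
  simp only at this
  rw [Real.sq_sqrt (by positivity)] at this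
  simpa [Fin.sum_univ_two] using this

open EuclideanGeometry

/-- The line through `P` and `Q` is tangent to the ellipse `x²/a² + y²/b² = 1`:
it lies on a line `{(x,y) : p·x + q·y = 1}` with `a²p² + b²q² = 1`. -/
def SideTangentToEllipse (a b : ℝ) (P Q : EuclideanSpace ℝ (Fin 2)) : Prop :=
  ∃ p q : ℝ, a ^ 2 * p ^ 2 + b ^ 2 * q ^ 2 = 1 ∧
    p * P 0 + q * P 1 = 1 ∧ p * Q 0 + q * Q 1 = 1

/-- For `a > b > 0`: any triangle of the circumcircle family (inscribed in the
circle of radius `a + b` centered at the origin, side lines tangent to the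
concentric ellipse `x²/a² + y²/b² = 1`) has sum of squared interior-angle
cosines equal to `(a² + ab + b²)/(a+b)²`, i.e. equal to `1 - 2k'` where
`k' = ab/(2(a+b)²)`. -/
theorem circumcircle_family_sum_sq_cosines (a b : ℝ) (hb : 0 < b) (hab : b < a)
    (k' : ℝ) (hk' : k' = a * b / (2 * (a + b) ^ 2))
    (P₁ P₂ P₃ : EuclideanSpace ℝ (Fin 2))
    (hind : AffineIndependent ℝ ![P₁, P₂, P₃])
    (hC₁ : dist P₁ 0 = a + b) (hC₂ : dist P₂ 0 = a + b) (hC₃ : dist P₃ 0 = a + b)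
    (ht₁ : SideTangentToEllipse a b P₁ P₂)
    (ht₂ : SideTangentToEllipse a b P₂ P₃)
    (ht₃ : SideTangentToEllipse a b P₃ P₁) :
    Real.cos (∠ P₂ P₁ P₃) ^ 2 + Real.cos (∠ P₁ P₂ P₃) ^ 2 + Real.cos (∠ P₁ P₃ P₂) ^ 2 =
      (a ^ 2 + a * b + b ^ 2) / (a + b) ^ 2 ∧
    Real.cos (∠ P₂ P₁ P₃) ^ 2 + Real.cos (∠ P₁ P₂ P₃) ^ 2 + Real.cos (∠ P₁ P₃ P₂) ^ 2 =
      1 - 2 * k' := by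
  have ha : 0 < a := hb.trans hab
  have hR : (0:ℝ) < (a + b)^2 := by positivity
  set x1 := P₁ 0 with hx1; set y1 := P₁ 1 with hy1
  set x2 := P₂ 0 with hx2; set y2 := P₂ 1 with hy2
  set x3 := P₃ 0 with hx3; set y3 := P₃ 1 with hy3
  have hc1 : x1^2 + y1^2 = (a+b)^2 := coord_circle P₁ (a+b) hC₁
  have hc2 : x2^2 + y2^2 = (a+b)^2 := coord_circle P₂ (a+b) hC₂
  have hc3 : x3^2 + y3^2 = (a+b)^2 := coord_circle P₃ (a+b) hC₃
  -- pairwise distinct vertices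
  have hinj := hind.injective
  have h12 : P₁ ≠ P₂ := by
    intro h
    have := hinj (a₁ := 0) (a₂ := 1) (by simpa using h); simp at this
  have h23 : P₂ ≠ P₃ := by
    intro h
    have := hinj (a₁ := 1) (a₂ := 2) (by simpa using h); simp at this
  have h31 : P₃ ≠ P₁ := by
    intro h
    have := hinj (a₁ := 2) (a₂ := 0) (by simpa using h); simp at this
  have hn12 : (x2 - x1)^2 + (y2 - y1)^2 ≠ 0 := coord_ne P₁ P₂ h12
  have hn13 : (x3 - x1)^2 + (y3 - y1)^2 ≠ 0 := coord_ne P₁ P₃ h31.symm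
  have hn23 : (x3 - x2)^2 + (y3 - y2)^2 ≠ 0 := coord_ne P₂ P₃ h23
  have hn21 : (x1 - x2)^2 + (y1 - y2)^2 ≠ 0 := coord_ne P₂ P₁ h12.symm
  have hn31 : (x1 - x3)^2 + (y1 - y3)^2 ≠ 0 := coord_ne P₃ P₁ h31
  have hn32 : (x2 - x3)^2 + (y2 - y3)^2 ≠ 0 := coord_ne P₃ P₂ h23.symm
  -- bilinear tangency relations
  obtain ⟨p1, q1, htan1, hL11, hL12⟩ := ht₁
  obtain ⟨p2, q2, htan2, hL22, hL23⟩ := ht₂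
  obtain ⟨p3, q3, htan3, hL33, hL31⟩ := ht₃
  have hW12 : b*(x1*x2) + a*(y1*y2) = -(a*b*(a+b)) :=
    aux_W a b x1 y1 x2 y2 p1 q1 hc1 hc2 hn21 htan1 hL11 hL12
  have hW23 : b*(x2*x3) + a*(y2*y3) = -(a*b*(a+b)) :=
    aux_W a b x2 y2 x3 y3 p2 q2 hc2 hc3 hn32 htan2 hL22 hL23
  have hW31 : b*(x3*x1) + a*(y3*y1) = -(a*b*(a+b)) :=
    aux_W a b x3 y3 x1 y1 p3 q3 hc3 hc1 (by
      intro h0; apply hn31; linear_combination h0) htan3 hL33 hL31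
  -- the Poncelet invariant: sum of pairwise dot products
  have h23' : ¬(x2 = x3 ∧ y2 = y3) := by
    rintro ⟨hx, hy⟩
    apply hn23
    rw [hx, hy]; ring
  have hsum : (x1*x2 + y1*y2) + (x1*x3 + y1*y3) + (x2*x3 + y2*y3) = -(a^2 + 4*a*b + b^2) :=
    aux_sum a b x1 y1 x2 y2 x3 y3 hb hab hc1 hc2 hc3 h23'
      hW12 (by linear_combination hW31) hW23
  -- squared cosines via the inscribed-chord identity
  have A1 : Real.cos (∠ P₂ P₁ P₃) ^ 2 = 1 - ((x2-x3)^2 + (y2-y3)^2)/(4*(a+b)^2) := by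
    rw [coord_cos_sq P₁ P₂ P₃]
    exact div_step _ _ _ _ _ hn12 hn13 hR (aux_chord a b x1 y1 x2 y2 x3 y3 hc1 hc2 hc3)
  have A2 : Real.cos (∠ P₁ P₂ P₃) ^ 2 = 1 - ((x1-x3)^2 + (y1-y3)^2)/(4*(a+b)^2) := by
    rw [coord_cos_sq P₂ P₁ P₃]
    exact div_step _ _ _ _ _ hn21 hn23 hR (aux_chord a b x2 y2 x1 y1 x3 y3 hc2 hc1 hc3)
  have A3 : Real.cos (∠ P₁ P₃ P₂) ^ 2 = 1 - ((x1-x2)^2 + (y1-y2)^2)/(4*(a+b)^2) := by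
    rw [coord_cos_sq P₃ P₁ P₂]
    exact div_step _ _ _ _ _ hn31 hn32 hR (aux_chord a b x3 y3 x1 y1 x2 y2 hc3 hc1 hc2)
  -- sum of squared chord lengths
  have hS : ((x2-x3)^2 + (y2-y3)^2) + ((x1-x3)^2 + (y1-y3)^2) + ((x1-x2)^2 + (y1-y2)^2)
      = 6*(a+b)^2 + 2*(a^2 + 4*a*b + b^2) := by
    linear_combination 2*hc1 + 2*hc2 + 2*hc3 - 2*hsum
  have hfin : Real.cos (∠ P₂ P₁ P₃) ^ 2 + Real.cos (∠ P₁ P₂ P₃) ^ 2 + Real.cos (∠ P₁ P₃ P₂) ^ 2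
      = (a ^ 2 + a * b + b ^ 2) / (a + b) ^ 2 := by
    rw [A1, A2, A3]
    have h4 : (4*(a+b)^2) ≠ 0 := by positivity
    have hab2 : ((a+b):ℝ)^2 ≠ 0 := by positivity
    field_simp
    linear_combination (-1:ℝ)*hS
  refine ⟨hfin, hfin.trans ?_⟩
  rw [hk']
  have hab2 : ((a+b):ℝ)^2 ≠ 0 := by positivity
  field_simp
  ring
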